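/- The sum Σ_{q=1}^∞ (6/π²)·(1/q)·∏_{p | q} 1/(p+1) over all positive integers q equals 1. -/
import Mathlib

open Nat Finset

noncomputable def F8 : ℕ → ℝ :=
  fun q => (1 / (q : ℝ)) * ∏ p ∈ q.primeFactors, (1 : ℝ) / (p + 1)

noncomputable def G8 : ℕ → ℝ := fun n => 1 / (n : ℝ) ^ 2

lemma F8_zero : F8 0 = 0 := by simp [F8]

lemma F8_one : F8 1 = 1 := by simp [F8]

lemma F8_nonneg (q : ℕ) : 0 ≤ F8 q := by
  apply mul_nonneg (by positivity)
  exact Finset.prod_nonneg fun p _ => by positivity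

lemma F8_mul {m n : ℕ} (h : Nat.Coprime m n) : F8 (m * n) = F8 m * F8 n := by
  rcases eq_or_ne m 0 with rfl | hm
  · simp [F8]
  rcases eq_or_ne n 0 with rfl | hn
  · simp [F8]
  unfold F8
  rw [Nat.primeFactors_mul hm hn, Finset.prod_union h.disjoint_primeFactors,
    Nat.cast_mul]
  ring

lemma G8_zero : G8 0 = 0 := by simp [G8]
lemma G8_one : G8 1 = 1 := by simp [G8]
lemma G8_nonneg (n : ℕ) : 0 ≤ G8 n := by simp only [G8]; positivity
lemma G8_mul {m n : ℕ} (_ : Nat.Coprime m n) : G8 (m * n) = G8 m * G8 n := by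
  simp only [G8, Nat.cast_mul, mul_pow, one_div, mul_inv]

lemma G8_hasSum : HasSum G8 (Real.pi ^ 2 / 6) := hasSum_zeta_two

lemma G8_summable : Summable G8 := G8_hasSum.summable

lemma G8_summable_norm : Summable (‖G8 ·‖) := by
  simpa only [Real.norm_of_nonneg (G8_nonneg _)] using G8_summable

-- prime power sums agree
lemma F8_pow {p : ℕ} (hp : p.Prime) (e : ℕ) :
    F8 (p ^ (e + 1)) = (1 / (p + 1 : ℝ)) * (1 / (p : ℝ)) ^ (e + 1) := by
  unfold F8
  rw [Nat.primeFactors_prime_pow (Nat.succ_ne_zero e) hp]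
  simp [div_pow, one_div]
  ring

lemma F8_pow_summable {p : ℕ} (hp : p.Prime) :
    Summable (fun e : ℕ => ‖F8 (p ^ e)‖) := by
  have hp1 : (1 : ℝ) < p := by exact_mod_cast hp.one_lt
  have h0 : (0 : ℝ) < p := by linarith
  have hlt : (1 : ℝ) / p < 1 := by rw [div_lt_one h0]; exact hp1
  have hge : (0 : ℝ) ≤ 1 / p := by positivity
  have hg : Summable (fun e : ℕ => ((1 : ℝ) / p) ^ e) :=
    summable_geometric_of_lt_one hge hlt
  apply Summable.of_nonneg_of_le (fun _ => norm_nonneg _) _ hg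
  intro e
  rw [Real.norm_of_nonneg (F8_nonneg _)]
  cases e with
  | zero => simp [F8_one]
  | succ e =>
      rw [F8_pow hp e]
      have : (1 : ℝ) / (p + 1) ≤ 1 := by
        rw [div_le_one (by linarith)]; linarith
      calc (1 / (p + 1 : ℝ)) * (1 / (p : ℝ)) ^ (e + 1)
          ≤ 1 * (1 / (p : ℝ)) ^ (e + 1) := by
            apply mul_le_mul_of_nonneg_right this (by positivity)
        _ = (1 / (p : ℝ)) ^ (e + 1) := one_mul _

lemma F8_tsum_pow {p : ℕ} (hp : p.Prime) :
    ∑' e : ℕ, F8 (p ^ e) = ∑' e : ℕ, G8 (p ^ e) := by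
  have hp1 : (1 : ℝ) < p := by exact_mod_cast hp.one_lt
  have h0 : (0 : ℝ) < p := by linarith
  have hlt : (1 : ℝ) / p < 1 := by rw [div_lt_one h0]; exact hp1
  have hge : (0 : ℝ) ≤ 1 / p := by positivity
  have hlt2 : (1 : ℝ) / (p:ℝ)^2 < 1 := by
    rw [div_lt_one (by positivity)]; nlinarith
  have hge2 : (0 : ℝ) ≤ 1 / (p:ℝ)^2 := by positivity
  have hG : ∑' e : ℕ, G8 (p ^ e) = (1 - 1/(p:ℝ)^2)⁻¹ := by
    have : ∀ e : ℕ, G8 (p ^ e) = ((1:ℝ)/(p:ℝ)^2) ^ e := by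
      intro e; simp only [G8, Nat.cast_pow, div_pow, one_pow, ← pow_mul, mul_comm e 2]
    rw [tsum_congr this, tsum_geometric_of_lt_one hge2 hlt2]
  have hF : ∑' e : ℕ, F8 (p ^ e) =
      1 + (1/(p+1:ℝ)) * ((1/(p:ℝ)) * (1 - 1/(p:ℝ))⁻¹) := by
    rw [Summable.tsum_eq_zero_add ((F8_pow_summable hp).of_norm)]
    congr 1
    · simp [F8_one]
    · have : ∀ e : ℕ, F8 (p ^ (e + 1)) = (1/(p+1:ℝ)) * ((1/(p:ℝ)) * (1/(p:ℝ))^e) := by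
        intro e; rw [F8_pow hp e]; ring
      rw [tsum_congr this, tsum_mul_left, tsum_mul_left,
        tsum_geometric_of_lt_one hge hlt]
  rw [hF, hG]
  have h1 : (1:ℝ) - 1/(p:ℝ) ≠ 0 := by
    have : (1:ℝ)/(p:ℝ) < 1 := hlt
    linarith
  have h2 : (1:ℝ) - 1/(p:ℝ)^2 ≠ 0 := by linarith
  have h3 : (p:ℝ)^2 - 1 ≠ 0 := by nlinarith
  have h4 : (p:ℝ) + 1 ≠ 0 := by linarith
  have h5 : (p:ℝ) ≠ 0 := by linarith
  rw [show ((1:ℝ) - 1/(p:ℝ)^2)⁻¹ = 1/(1-1/(p:ℝ)^2) from (one_div _).symm, eq_div_iff h2]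
  have h6 : (-1 + (p:ℝ)^2) ≠ 0 := by nlinarith
  have h7 : (p:ℝ) - 1 ≠ 0 := by linarith
  field_simp
  ring

lemma F8_summable : Summable F8 := by
  apply summable_of_sum_le (c := Real.pi ^ 2 / 6) F8_nonneg
  intro S
  set N : ℕ := S.sup id + 1 with hN
  have hsub : ∀ q ∈ S, q ≠ 0 → q ∈ N.smoothNumbers := by
    intro q hq hq0
    refine Nat.mem_smoothNumbers.mpr ⟨hq0, fun p hp => ?_⟩
    have h1 : p ≤ q := Nat.le_of_dvd (Nat.pos_of_ne_zero hq0)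
      (Nat.dvd_of_mem_primeFactorsList hp)
    have h2 : q ≤ S.sup id := Finset.le_sup (f := id) hq
    omega
  have hFsm := EulerProduct.summable_and_hasSum_smoothNumbers_prod_primesBelow_tsum
    F8_one (fun {m n} h => F8_mul h) (fun {p} hp => F8_pow_summable hp) N
  have hGsm := EulerProduct.summable_and_hasSum_smoothNumbers_prod_primesBelow_tsum
    G8_one (fun {m n} h => G8_mul h) (fun {p} hp => G8_summable_norm.comp_injective
      (Nat.pow_right_injective hp.one_lt)) N
  -- sum over S ≤ tsum over smoothNumbers N of F8
  have step1 : ∑ q ∈ S, F8 q ≤ ∑' m : N.smoothNumbers, F8 m := by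
    have hsummable : Summable (fun m : N.smoothNumbers => F8 m) := hFsm.2.summable
    calc ∑ q ∈ S, F8 q = ∑ q ∈ S, Set.indicator (N.smoothNumbers) F8 q := by
          apply Finset.sum_congr rfl
          intro q hq
          rcases eq_or_ne q 0 with rfl | hq0
          · rw [F8_zero]
            exact (Set.indicator_apply_eq_zero.mpr (fun _ => F8_zero)).symm
          · rw [Set.indicator_of_mem (hsub q hq hq0)]
      _ ≤ ∑' q : ℕ, Set.indicator (N.smoothNumbers) F8 q := by
          exact Summable.sum_le_tsum S (fun q _ => Set.indicator_nonneg (fun x _ => F8_nonneg x) q)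
            (summable_subtype_iff_indicator.mp hsummable)
      _ = ∑' m : N.smoothNumbers, F8 m := (_root_.tsum_subtype _ _).symm
  have step2 : ∑' m : N.smoothNumbers, F8 m = ∑' m : N.smoothNumbers, G8 m := by
    rw [hFsm.2.tsum_eq, hGsm.2.tsum_eq]
    exact Finset.prod_congr rfl fun p hp => F8_tsum_pow (Nat.prime_of_mem_primesBelow hp)
  have step3 : ∑' m : N.smoothNumbers, G8 m ≤ Real.pi ^ 2 / 6 := by
    rw [_root_.tsum_subtype]
    rw [← G8_hasSum.tsum_eq]
    apply Summable.tsum_le_tsum _ _ G8_summable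
    · intro n
      exact Set.indicator_le_self' (fun x _ => G8_nonneg x) n
    · exact summable_subtype_iff_indicator.mp hGsm.2.summable
  exact step1.trans (step2.le.trans step3)

lemma F8_summable_norm : Summable (‖F8 ·‖) := by
  simpa only [Real.norm_of_nonneg (F8_nonneg _)] using F8_summable

lemma F8_tsum : ∑' q : ℕ, F8 q = Real.pi ^ 2 / 6 := by
  rw [← EulerProduct.eulerProduct_tprod F8_one (fun {m n} h => F8_mul h)
    F8_summable_norm F8_zero]
  rw [← G8_hasSum.tsum_eq,
    ← EulerProduct.eulerProduct_tprod G8_one (fun {m n} h => G8_mul h)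
    G8_summable_norm G8_zero]
  exact tprod_congr fun p => F8_tsum_pow p.prop

theorem stmt8 :
    ∑' q : ℕ, (6 / Real.pi ^ 2) * (1 / (q : ℝ)) * ∏ p ∈ q.primeFactors, (1 : ℝ) / (p + 1)
      = 1 := by
  have hpi : Real.pi ≠ 0 := Real.pi_ne_zero
  have : ∀ q : ℕ, (6 / Real.pi ^ 2) * (1 / (q : ℝ)) * ∏ p ∈ q.primeFactors, (1 : ℝ) / (p + 1)
      = (6 / Real.pi ^ 2) * F8 q := by
    intro q; rw [F8, mul_assoc]
  rw [tsum_congr this, tsum_mul_left, F8_tsum]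
  field_simp
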